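/- Under the permutation null distribution, the random variables R_w(t) = q(t)R₁(t) + p(t)R₂(t) (with p(t) = (t−1)/(n−2), q(t) = 1−p(t)) and R_diff(t) = R₁(t) − R₂(t) are uncorrelated: Cov(R_w(t), R_diff(t)) = 0. -/

import Mathlib

open Finset
open scoped Classical

noncomputable section

/-- Label of vertex `v` under permutation `π`: a value in `{1,...,n}`. -/
def lab {n : ℕ} (π : Equiv.Perm (Fin n)) (v : Fin n) : ℕ := (π v).val + 1

/-- Number of edges of `G` with both endpoint labels `≤ t`. -/
def R1 {n : ℕ} (G : SimpleGraph (Fin n)) (t : ℕ) (π : Equiv.Perm (Fin n)) : ℕ :=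
  (G.edgeFinset.filter (fun e => ∀ v ∈ e, lab π v ≤ t)).card

/-- Number of edges of `G` with both endpoint labels `> t`. -/
def R2 {n : ℕ} (G : SimpleGraph (Fin n)) (t : ℕ) (π : Equiv.Perm (Fin n)) : ℕ :=
  (G.edgeFinset.filter (fun e => ∀ v ∈ e, t < lab π v)).card

/-- Number of edges of `G` with one endpoint label `≤ t` and the other `> t`. -/
def R0 {n : ℕ} (G : SimpleGraph (Fin n)) (t : ℕ) (π : Equiv.Perm (Fin n)) : ℕ :=
  (G.edgeFinset.filter (fun e => (∃ v ∈ e, lab π v ≤ t) ∧ (∃ v ∈ e, t < lab π v))).card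

/-- Expectation under the permutation null distribution (uniform over all `n!` permutations). -/
def Ex {n : ℕ} (f : Equiv.Perm (Fin n) → ℝ) : ℝ :=
  (∑ π : Equiv.Perm (Fin n), f π) / (Nat.factorial n)

/-- Variance under the permutation null distribution. -/
def Var {n : ℕ} (f : Equiv.Perm (Fin n) → ℝ) : ℝ := Ex (fun π => (f π - Ex f) ^ 2)

/-- Covariance under the permutation null distribution. -/
def Cov {n : ℕ} (f g : Equiv.Perm (Fin n) → ℝ) : ℝ :=
  Ex (fun π => (f π - Ex f) * (g π - Ex g))

/-- Weighted edge count `R_w(t) = q(t) R₁(t) + p(t) R₂(t)` with `p(t) = (t-1)/(n-2)`. -/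
def Rw {n : ℕ} (G : SimpleGraph (Fin n)) (t : ℕ) (π : Equiv.Perm (Fin n)) : ℝ :=
  (1 - ((t : ℝ) - 1) / ((n : ℝ) - 2)) * (R1 G t π : ℝ)
    + (((t : ℝ) - 1) / ((n : ℝ) - 2)) * (R2 G t π : ℝ)


/-- Difference of within-group edge counts `R_diff(t) = R₁(t) - R₂(t)`. -/
def Rdiff {n : ℕ} (G : SimpleGraph (Fin n)) (t : ℕ) (π : Equiv.Perm (Fin n)) : ℝ :=
  (R1 G t π : ℝ) - (R2 G t π : ℝ)


namespace CovAux

variable {n t : ℕ}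

/-- vertices whose label under `π` is ≤ t, i.e. `(π v).val < t`. -/
def Sp (t : ℕ) (π : Equiv.Perm (Fin n)) : Finset (Fin n) :=
  univ.filter (fun v => ((π v : Fin n) : ℕ) < t)

lemma mem_Sp {π : Equiv.Perm (Fin n)} {v : Fin n} : v ∈ Sp t π ↔ ((π v : Fin n) : ℕ) < t := by
  simp [Sp]

lemma card_T (ht : t ≤ n) : #(univ.filter (fun i : Fin n => (i : ℕ) < t)) = t := by
  have : univ.filter (fun i : Fin n => (i : ℕ) < t) = (univ : Finset (Fin t)).image (Fin.castLE ht) := by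
    ext j
    simp only [mem_filter, mem_univ, true_and, mem_image]
    constructor
    · intro hj; exact ⟨⟨j, hj⟩, rfl⟩
    · rintro ⟨i, rfl⟩; simpa using i.2
  rw [this, Finset.card_image_of_injective _ (Fin.castLE_injective ht)]
  simp

lemma card_Sp (ht : t ≤ n) (π : Equiv.Perm (Fin n)) : #(Sp t π) = t := by
  have h : Sp t π = (univ.filter (fun i : Fin n => (i : ℕ) < t)).image π.symm := by
    ext v
    simp only [Sp, mem_filter, mem_univ, true_and, mem_image]
    constructor
    · intro hv; exact ⟨π v, hv, by simp⟩
    · rintro ⟨i, hi, rfl⟩; simpa using hi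
  rw [h, Finset.card_image_of_injective _ π.symm.injective, card_T ht]

lemma fiber_card (ht : t ≤ n) (S : Finset (Fin n)) (hS : #S = t) :
    #(univ.filter (fun π : Equiv.Perm (Fin n) => Sp t π = S))
      = t.factorial * (n - t).factorial := by
  have key : ∀ π : Equiv.Perm (Fin n), Sp t π = S ↔ ∀ v, v ∈ S ↔ ((π v : Fin n) : ℕ) < t := by
    intro π
    constructor
    · intro h v; rw [← h, mem_Sp]
    · intro h; ext v; rw [mem_Sp, h v]
  -- build an equivalence
  let E : {π : Equiv.Perm (Fin n) // Sp t π = S} ≃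
      ({v // v ∈ S} ≃ {i : Fin n // (i : ℕ) < t}) × ({v // ¬ v ∈ S} ≃ {i : Fin n // ¬ (i : ℕ) < t}) :=
  { toFun := fun π =>
      ⟨Equiv.subtypeEquiv π.1 (fun v => ((key π.1).1 π.2) v),
       Equiv.subtypeEquiv π.1 (fun v => not_congr (((key π.1).1 π.2) v))⟩
    invFun := fun ef =>
      ⟨(Equiv.sumCompl (· ∈ S)).symm.trans ((ef.1.sumCongr ef.2).trans
          (Equiv.sumCompl (fun i : Fin n => (i : ℕ) < t))), by
        rw [key]
        intro v
        by_cases hv : v ∈ S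
        · simp [hv, Equiv.sumCompl_symm_apply_of_pos hv, (ef.1 ⟨v, hv⟩).2]
        · simp [hv, Equiv.sumCompl_symm_apply_of_neg hv, (ef.2 ⟨v, hv⟩).2]⟩
    left_inv := fun π => by
      apply Subtype.ext
      ext v
      by_cases hv : v ∈ S
      · simp [Equiv.sumCompl_symm_apply_of_pos hv]
      · simp [Equiv.sumCompl_symm_apply_of_neg hv]
    right_inv := fun ef => by
      refine Prod.ext ?_ ?_
      · apply Equiv.ext; rintro ⟨v, hv⟩
        apply Subtype.ext
        simp [Equiv.sumCompl_symm_apply_of_pos hv]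
      · apply Equiv.ext; rintro ⟨v, hv⟩
        apply Subtype.ext
        simp [Equiv.sumCompl_symm_apply_of_neg hv] }
  have hcard := Fintype.card_congr E
  rw [Fintype.card_subtype] at hcard
  rw [hcard, Fintype.card_prod]
  have c1 : Fintype.card {v // v ∈ S} = t := by simp [hS]
  have c2 : Fintype.card {i : Fin n // (i : ℕ) < t} = t := by
    rw [Fintype.card_subtype, card_T ht]
  have c3 : Fintype.card {v // ¬ v ∈ S} = n - t := by
    rw [Fintype.card_subtype]
    rw [Finset.filter_not, Finset.card_sdiff_of_subset (filter_subset _ _)]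
    simp [Finset.filter_mem_eq_inter, hS]
  have c4 : Fintype.card {i : Fin n // ¬ (i : ℕ) < t} = n - t := by
    rw [Fintype.card_subtype]
    rw [Finset.filter_not, Finset.card_sdiff_of_subset (filter_subset _ _)]
    simp [card_T ht]
  rw [Fintype.card_equiv (Fintype.equivOfCardEq (by rw [c1, c2])),
      Fintype.card_equiv (Fintype.equivOfCardEq (by rw [c3, c4])), c1, c3]


example (A B : Finset (Fin n)) (h : Disjoint A B) : #(A ∪ B) = #A + #B := by
  exact card_union_of_disjoint h

lemma subset_count (ht : t ≤ n) (A B : Finset (Fin n)) (hAB : Disjoint A B) :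
    t.factorial * (n - t).factorial *
      #((powersetCard t (univ : Finset (Fin n))).filter (fun S => A ⊆ S ∧ Disjoint B S))
    = t.descFactorial #A * (n - t).descFactorial #B * (n - #A - #B).factorial := by
  have hABn : #A + #B ≤ n := by
    simpa [card_union_of_disjoint hAB] using card_le_card (subset_univ (A ∪ B))
  by_cases hA : #A ≤ t
  · by_cases hB : #B ≤ n - t
    · -- main case
      have count : #((powersetCard t (univ : Finset (Fin n))).filter
            (fun S => A ⊆ S ∧ Disjoint B S))
          = #(powersetCard (t - #A) (((univ : Finset (Fin n)) \ A) \ B)) := by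
        apply Finset.card_bij' (fun S _ => S \ A) (fun S' _ => S' ∪ A)
        · intro S hS
          simp only [mem_filter, mem_powersetCard] at hS
          obtain ⟨⟨-, hcard⟩, hAS, hBS⟩ := hS
          rw [mem_powersetCard]
          constructor
          · intro x hx
            simp only [mem_sdiff, mem_univ, true_and] at hx ⊢
            exact ⟨hx.2, fun hxB => (disjoint_left.mp hBS hxB) hx.1⟩
          · rw [card_sdiff_of_subset hAS, hcard]
        · intro S' hS'
          rw [mem_powersetCard] at hS'
          obtain ⟨hsub, hcard⟩ := hS'
          have hdisjA : Disjoint S' A := by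
            refine disjoint_left.mpr fun x hx hxA => ?_
            have := hsub hx; simp [mem_sdiff] at this; exact this.1 hxA
          simp only [mem_filter, mem_powersetCard]
          refine ⟨⟨subset_univ _, ?_⟩, subset_union_right, ?_⟩
          · rw [card_union_of_disjoint hdisjA, hcard]; omega
          · rw [disjoint_union_right]
            refine ⟨disjoint_right.mpr fun x hx => ?_, hAB.symm⟩
            have := hsub hx; simp [mem_sdiff] at this; exact this.2
        · intro S hS
          simp only [mem_filter, mem_powersetCard] at hS
          exact sdiff_union_of_subset hS.2.1
        · intro S' hS'
          rw [mem_powersetCard] at hS'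
          apply union_sdiff_cancel_right
          refine disjoint_left.mpr fun x hx hxA => ?_
          have := hS'.1 hx; simp [mem_sdiff] at this; exact this.1 hxA
      have hBsub : B ⊆ (univ : Finset (Fin n)) \ A :=
        subset_sdiff.mpr ⟨subset_univ _, hAB.symm⟩
      have hcards : #(((univ : Finset (Fin n)) \ A) \ B) = n - #A - #B := by
        rw [card_sdiff_of_subset hBsub, card_sdiff_of_subset (subset_univ A), card_univ, Fintype.card_fin]
      rw [count, card_powersetCard, hcards]
      have h1 : (t - #A).factorial * t.descFactorial #A = t.factorial :=
        Nat.factorial_mul_descFactorial hA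
      have h2 : ((n - t) - #B).factorial * (n - t).descFactorial #B = (n - t).factorial :=
        Nat.factorial_mul_descFactorial hB
      have h3 : (n - #A - #B).choose (t - #A) * (t - #A).factorial * ((n - t) - #B).factorial
          = (n - #A - #B).factorial := by
        have h := Nat.choose_mul_factorial_mul_factorial
          (show t - #A ≤ n - #A - #B by omega)
        rw [show n - #A - #B - (t - #A) = (n - t) - #B by omega] at h
        exact h
      calc t.factorial * (n - t).factorial * (n - #A - #B).choose (t - #A)
          = ((t - #A).factorial * t.descFactorial #A) *
            (((n - t) - #B).factorial * (n - t).descFactorial #B) *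
            (n - #A - #B).choose (t - #A) := by rw [h1, h2]
        _ = t.descFactorial #A * (n - t).descFactorial #B *
            ((n - #A - #B).choose (t - #A) * (t - #A).factorial * ((n - t) - #B).factorial) := by
              ring
        _ = _ := by rw [h3]
    · -- #B > n - t : both sides zero
      have hempty : ((powersetCard t (univ : Finset (Fin n))).filter
          (fun S => A ⊆ S ∧ Disjoint B S)) = ∅ := by
        rw [filter_eq_empty_iff]
        rintro S hS ⟨-, hBS⟩
        rw [mem_powersetCard] at hS
        have hBsub : B ⊆ univ \ S := subset_sdiff.mpr ⟨subset_univ _, hBS⟩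
        have hle := card_le_card hBsub
        rw [card_sdiff_of_subset (subset_univ _), card_univ, Fintype.card_fin, hS.2] at hle
        omega
      rw [hempty]
      have : (n - t).descFactorial #B = 0 :=
        Nat.descFactorial_eq_zero_iff_lt.mpr (by omega)
      simp [this]
  · -- #A > t : both sides zero
    have hempty : ((powersetCard t (univ : Finset (Fin n))).filter
        (fun S => A ⊆ S ∧ Disjoint B S)) = ∅ := by
      rw [filter_eq_empty_iff]
      rintro S hS ⟨hAS, -⟩
      rw [mem_powersetCard] at hS
      have h1 := card_le_card hAS
      have h2 := hS.2
      omega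
    rw [hempty]
    have : t.descFactorial #A = 0 :=
      Nat.descFactorial_eq_zero_iff_lt.mpr (by omega)
    simp [this]


end CovAux

namespace CovAux
variable {n t : ℕ}

lemma perm_count (ht : t ≤ n) (A B : Finset (Fin n)) (hAB : Disjoint A B) :
    #(univ.filter (fun π : Equiv.Perm (Fin n) => A ⊆ Sp t π ∧ Disjoint B (Sp t π)))
    = t.descFactorial #A * (n - t).descFactorial #B * (n - #A - #B).factorial := by
  rw [card_eq_sum_card_fiberwise (f := Sp t)
      (t := (powersetCard t (univ : Finset (Fin n))).filter (fun S => A ⊆ S ∧ Disjoint B S))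
      (fun π hπ => by
        simp only [mem_coe, mem_filter, mem_univ, true_and] at hπ
        exact mem_filter.mpr ⟨mem_powersetCard.mpr ⟨subset_univ _, card_Sp ht π⟩, hπ⟩)]
  have hterm : ∀ S ∈ (powersetCard t (univ : Finset (Fin n))).filter
      (fun S => A ⊆ S ∧ Disjoint B S),
      #((univ.filter (fun π : Equiv.Perm (Fin n) => A ⊆ Sp t π ∧ Disjoint B (Sp t π))).filter
        (fun π => Sp t π = S)) = t.factorial * (n - t).factorial := by
    intro S hS
    rw [mem_filter, mem_powersetCard] at hS
    have heq : (univ.filter (fun π : Equiv.Perm (Fin n) =>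
        A ⊆ Sp t π ∧ Disjoint B (Sp t π))).filter (fun π => Sp t π = S)
        = univ.filter (fun π : Equiv.Perm (Fin n) => Sp t π = S) := by
      rw [filter_filter]
      apply filter_congr
      intro π _
      constructor
      · rintro ⟨-, h⟩; exact h
      · intro h; exact ⟨by rw [h]; exact hS.2, h⟩
    rw [heq, fiber_card ht S hS.1.2]
  rw [Finset.sum_congr rfl hterm, Finset.sum_const, smul_eq_mul, mul_comm,
    subset_count ht A B hAB]

end CovAux

namespace CovAux
variable {n t : ℕ}

lemma Nfac_ne : ((n.factorial : ℝ)) ≠ 0 := by positivity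

lemma card_perm_fin : (Finset.univ : Finset (Equiv.Perm (Fin n))).card = n.factorial := by
  simp [Finset.card_univ, Fintype.card_perm, Fintype.card_fin]

lemma Ex_eq (f : Equiv.Perm (Fin n) → ℝ) :
    Ex f = (∑ π : Equiv.Perm (Fin n), f π) / (n.factorial : ℝ) := rfl

lemma Cov_eq (f g : Equiv.Perm (Fin n) → ℝ) :
    Cov f g = Ex (fun π => f π * g π) - Ex f * Ex g := by
  have hN : ((n.factorial : ℝ)) ≠ 0 := Nfac_ne
  simp only [Cov, Ex]
  have expand : ∀ π : Equiv.Perm (Fin n),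
      (f π - (∑ ρ : Equiv.Perm (Fin n), f ρ) / (n.factorial : ℝ)) *
        (g π - (∑ ρ : Equiv.Perm (Fin n), g ρ) / (n.factorial : ℝ))
      = f π * g π - ((∑ ρ : Equiv.Perm (Fin n), f ρ) / (n.factorial : ℝ)) * g π
        - ((∑ ρ : Equiv.Perm (Fin n), g ρ) / (n.factorial : ℝ)) * f π
        + ((∑ ρ : Equiv.Perm (Fin n), f ρ) / (n.factorial : ℝ)) *
          ((∑ ρ : Equiv.Perm (Fin n), g ρ) / (n.factorial : ℝ)) := by
    intro π; ring
  rw [Finset.sum_congr rfl (fun π _ => expand π)]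
  rw [Finset.sum_add_distrib, Finset.sum_sub_distrib, Finset.sum_sub_distrib,
    Finset.sum_const, ← Finset.mul_sum, ← Finset.mul_sum, card_perm_fin]
  field_simp
  have h2 : ((n.factorial:ℝ))^2 * ((n.factorial:ℝ))⁻¹^2 = 1 := by field_simp
  linear_combination ((∑ ρ : Equiv.Perm (Fin n), f ρ) * ∑ ρ : Equiv.Perm (Fin n), g ρ) * h2

lemma Cov_smul_left (c : ℝ) (f g : Equiv.Perm (Fin n) → ℝ) :
    Cov (fun π => c * f π) g = c * Cov f g := by
  rw [Cov_eq, Cov_eq]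
  have h1 : Ex (fun π => c * f π * g π) = c * Ex (fun π => f π * g π) := by
    simp only [Ex, ← Finset.mul_sum, mul_div_assoc, mul_assoc]
  have h2 : Ex (fun π => c * f π) = c * Ex f := by
    simp only [Ex, ← Finset.mul_sum, mul_div_assoc]
  rw [h1, h2]; ring

lemma Ex_sum {ι : Type*} (I : Finset ι) (F : ι → Equiv.Perm (Fin n) → ℝ) :
    Ex (fun π => ∑ i ∈ I, F i π) = ∑ i ∈ I, Ex (F i) := by
  simp only [Ex, ← Finset.sum_div]
  rw [Finset.sum_comm]

lemma Cov_sum {ι κ : Type*} (I : Finset ι) (J : Finset κ)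
    (F : ι → Equiv.Perm (Fin n) → ℝ) (G : κ → Equiv.Perm (Fin n) → ℝ) :
    Cov (fun π => ∑ i ∈ I, F i π) (fun π => ∑ j ∈ J, G j π)
      = ∑ i ∈ I, ∑ j ∈ J, Cov (F i) (G j) := by
  rw [Cov_eq]
  have h1 : Ex (fun π => (∑ i ∈ I, F i π) * (∑ j ∈ J, G j π))
      = ∑ i ∈ I, ∑ j ∈ J, Ex (fun π => F i π * G j π) := by
    have : ∀ π : Equiv.Perm (Fin n),
        (∑ i ∈ I, F i π) * (∑ j ∈ J, G j π) = ∑ i ∈ I, ∑ j ∈ J, F i π * G j π := by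
      intro π; rw [Finset.sum_mul_sum]
    rw [show (fun π => (∑ i ∈ I, F i π) * (∑ j ∈ J, G j π))
        = fun π => ∑ i ∈ I, ∑ j ∈ J, F i π * G j π from funext this]
    rw [Ex_sum]
    exact Finset.sum_congr rfl fun i _ => Ex_sum _ _
  rw [h1, Ex_sum, Ex_sum, Finset.sum_mul_sum]
  rw [← Finset.sum_sub_distrib]
  refine Finset.sum_congr rfl fun i _ => ?_
  rw [← Finset.sum_sub_distrib]
  exact Finset.sum_congr rfl fun j _ => (Cov_eq (F i) (G j)).symm

lemma cast_desc2 (m : ℕ) : ((m.descFactorial 2 : ℕ) : ℝ) = m * (m - 1) := by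
  rcases m with _ | m
  · norm_num [Nat.descFactorial]
  · simp [Nat.descFactorial]; push_cast; ring_nf

lemma cast_desc3 (m : ℕ) : ((m.descFactorial 3 : ℕ) : ℝ) = m * (m - 1) * (m - 2) := by
  rcases m with _ | _ | m
  · norm_num [Nat.descFactorial]
  · norm_num [Nat.descFactorial]
  · simp [Nat.descFactorial]; push_cast; ring_nf

lemma cast_desc4 (m : ℕ) : ((m.descFactorial 4 : ℕ) : ℝ) = m * (m - 1) * (m - 2) * (m - 3) := by
  rcases m with _ | _ | _ | m
  · norm_num [Nat.descFactorial]
  · norm_num [Nat.descFactorial]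
  · norm_num [Nat.descFactorial]
  · simp [Nat.descFactorial]; push_cast; ring_nf

end CovAux

namespace CovAux
variable {n t : ℕ}

/-- indicator that all of `A` gets label ≤ t and all of `B` gets label > t -/
def ind (t : ℕ) (A B : Finset (Fin n)) : Equiv.Perm (Fin n) → ℝ :=
  fun π => if A ⊆ Sp t π ∧ Disjoint B (Sp t π) then 1 else 0

lemma Ex_ind (ht : t ≤ n) (A B : Finset (Fin n)) (hAB : Disjoint A B) :
    Ex (ind t A B) = ((t.descFactorial #A * (n - t).descFactorial #B
      * (n - #A - #B).factorial : ℕ) : ℝ) / ((n.factorial : ℕ) : ℝ) := by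
  rw [Ex_eq]
  congr 1
  rw [show (∑ π : Equiv.Perm (Fin n), ind t A B π)
      = ∑ π : Equiv.Perm (Fin n), if A ⊆ Sp t π ∧ Disjoint B (Sp t π) then (1:ℝ) else 0 from rfl]
  rw [Finset.sum_boole, perm_count ht A B hAB]

lemma ind_mul_ind (A B A' B' : Finset (Fin n)) (π : Equiv.Perm (Fin n)) :
    ind t A B π * ind t A' B' π = ind t (A ∪ A') (B ∪ B') π := by
  simp only [ind]
  have hiff : (A ∪ A' ⊆ Sp t π ∧ Disjoint (B ∪ B') (Sp t π))
      ↔ ((A ⊆ Sp t π ∧ Disjoint B (Sp t π)) ∧ (A' ⊆ Sp t π ∧ Disjoint B' (Sp t π))) := by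
    rw [union_subset_iff, disjoint_union_left]; tauto
  by_cases h1 : A ⊆ Sp t π ∧ Disjoint B (Sp t π)
  · by_cases h2 : A' ⊆ Sp t π ∧ Disjoint B' (Sp t π)
    · rw [if_pos h1, if_pos h2, if_pos (hiff.mpr ⟨h1, h2⟩), one_mul]
    · rw [if_pos h1, if_neg h2, if_neg (fun hc => h2 (hiff.mp hc).2), one_mul]
  · rw [if_neg h1, if_neg (fun hc => h1 (hiff.mp hc).1), zero_mul]

lemma ind_zero (h : ¬ Disjoint A B) : ind t A B = fun _ => (0:ℝ) := by
  funext π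
  have hc : ¬(A ⊆ Sp t π ∧ Disjoint B (Sp t π)) := by
    rintro ⟨hA, hB⟩
    obtain ⟨x, hxA, hxB⟩ := Finset.not_disjoint_iff.mp h
    exact (disjoint_left.mp hB hxB) (hA hxA)
  simp only [ind]
  rw [if_neg hc]

lemma Ex_zero : Ex (fun _ : Equiv.Perm (Fin n) => (0:ℝ)) = 0 := by simp [Ex]

end CovAux

namespace CovAux
variable {n t : ℕ}

lemma Ex_lin2 (a b : ℝ) (f g : Equiv.Perm (Fin n) → ℝ) :
    Ex (fun π => a * f π + b * g π) = a * Ex f + b * Ex g := by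
  simp only [Ex, Finset.sum_add_distrib, ← Finset.mul_sum]
  ring

lemma Ex_sub2 (f g : Equiv.Perm (Fin n) → ℝ) :
    Ex (fun π => f π - g π) = Ex f - Ex g := by
  simp only [Ex, Finset.sum_sub_distrib]
  ring

lemma Ex_lin4 (a b c d : ℝ) (f g h k : Equiv.Perm (Fin n) → ℝ) :
    Ex (fun π => a * f π - b * g π + c * h π - d * k π)
      = a * Ex f - b * Ex g + c * Ex h - d * Ex k := by
  simp only [Ex, Finset.sum_sub_distrib, Finset.sum_add_distrib, ← Finset.mul_sum]
  ring

end CovAux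

namespace CovAux
variable {n t : ℕ}

set_option maxHeartbeats 2000000 in
lemma cov_pair (hn : 4 ≤ n) (ht1 : 1 ≤ t) (ht2 : t < n) {u v w x : Fin n}
    (huv : u ≠ v) (hwx : w ≠ x) :
    Cov (fun π => ((n - t - 1 : ℕ) : ℝ) * ind t {u, v} ∅ π
          + ((t - 1 : ℕ) : ℝ) * ind t ∅ {u, v} π)
        (fun π => ind t {w, x} ∅ π - ind t ∅ {w, x} π) = 0 := by
  have ht : t ≤ n := ht2.le
  set P : Finset (Fin n) := {u, v} with hPdef
  set Q : Finset (Fin n) := {w, x} with hQdef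
  have hP : #P = 2 := card_pair huv
  have hQ : #Q = 2 := card_pair hwx
  set α : ℝ := ((n - t - 1 : ℕ) : ℝ) with hα
  set β : ℝ := ((t - 1 : ℕ) : ℝ) with hβ
  -- pointwise product expansion
  have hprod : (fun π => (α * ind t P ∅ π + β * ind t ∅ P π)
        * (ind t Q ∅ π - ind t ∅ Q π))
      = fun π => α * ind t (P ∪ Q) ∅ π - α * ind t P Q π
          + β * ind t Q P π - β * ind t ∅ (P ∪ Q) π := by
    funext π
    have e1 : ind t P ∅ π * ind t Q ∅ π = ind t (P ∪ Q) ∅ π := by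
      simpa using ind_mul_ind P ∅ Q ∅ π
    have e2 : ind t P ∅ π * ind t ∅ Q π = ind t P Q π := by
      simpa using ind_mul_ind P ∅ ∅ Q π
    have e3 : ind t ∅ P π * ind t Q ∅ π = ind t Q P π := by
      simpa using ind_mul_ind ∅ P Q ∅ π
    have e4 : ind t ∅ P π * ind t ∅ Q π = ind t ∅ (P ∪ Q) π := by
      simpa using ind_mul_ind ∅ P ∅ Q π
    linear_combination α * e1 - α * e2 + β * e3 - β * e4
  rw [Cov_eq, hprod, Ex_lin4, Ex_lin2, Ex_sub2]
  -- expectation values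
  have hEP : Ex (ind t P ∅) = ((t.descFactorial 2 : ℕ) : ℝ)
      * (((n - 2).factorial : ℕ) : ℝ) / ((n.factorial : ℕ) : ℝ) := by
    rw [Ex_ind ht P ∅ (disjoint_empty_right _), hP]
    push_cast
    simp
  have hEP' : Ex (ind t ∅ P) = (((n - t).descFactorial 2 : ℕ) : ℝ)
      * (((n - 2).factorial : ℕ) : ℝ) / ((n.factorial : ℕ) : ℝ) := by
    rw [Ex_ind ht ∅ P (disjoint_empty_left _), hP]
    push_cast
    simp
  have hEQ : Ex (ind t Q ∅) = ((t.descFactorial 2 : ℕ) : ℝ)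
      * (((n - 2).factorial : ℕ) : ℝ) / ((n.factorial : ℕ) : ℝ) := by
    rw [Ex_ind ht Q ∅ (disjoint_empty_right _), hQ]
    push_cast
    simp
  have hEQ' : Ex (ind t ∅ Q) = (((n - t).descFactorial 2 : ℕ) : ℝ)
      * (((n - 2).factorial : ℕ) : ℝ) / ((n.factorial : ℕ) : ℝ) := by
    rw [Ex_ind ht ∅ Q (disjoint_empty_left _), hQ]
    push_cast
    simp
  rw [hEP, hEP', hEQ, hEQ']
  -- cast facts
  have hαv : α = (n : ℝ) - (t : ℝ) - 1 := by
    rw [hα, Nat.cast_sub (show 1 ≤ n - t by omega), Nat.cast_sub ht]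
    norm_num
  have hβv : β = (t : ℝ) - 1 := by
    rw [hβ, Nat.cast_sub ht1]
    norm_num
  have hnt : ((n - t : ℕ) : ℝ) = (n : ℝ) - (t : ℝ) := by rw [Nat.cast_sub ht]
  have hn2 : ((n - 2 : ℕ) : ℝ) = (n : ℝ) - 2 := by
    rw [Nat.cast_sub (by omega)]; norm_num
  have hn3 : ((n - 3 : ℕ) : ℝ) = (n : ℝ) - 3 := by
    rw [Nat.cast_sub (by omega)]; norm_num
  have hct2 : ((t.descFactorial 2 : ℕ) : ℝ) = (t : ℝ) * ((t : ℝ) - 1) := cast_desc2 t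
  have hcs2 : (((n - t).descFactorial 2 : ℕ) : ℝ)
      = ((n : ℝ) - (t : ℝ)) * ((n : ℝ) - (t : ℝ) - 1) := by
    rw [cast_desc2 (n - t), hnt]
  have hnR : (4 : ℝ) ≤ (n : ℝ) := by exact_mod_cast hn
  by_cases hd : Disjoint P Q
  · -- the two pairs are disjoint : four distinct vertices
    have hm : #(P ∪ Q) = 4 := by rw [card_union_of_disjoint hd, hP, hQ]
    have hE1 : Ex (ind t (P ∪ Q) ∅) = ((t.descFactorial 4 : ℕ) : ℝ)
        * (((n - 4).factorial : ℕ) : ℝ) / ((n.factorial : ℕ) : ℝ) := by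
      rw [Ex_ind ht (P ∪ Q) ∅ (disjoint_empty_right _), hm]
      push_cast
      simp
    have hE4 : Ex (ind t ∅ (P ∪ Q)) = (((n - t).descFactorial 4 : ℕ) : ℝ)
        * (((n - 4).factorial : ℕ) : ℝ) / ((n.factorial : ℕ) : ℝ) := by
      rw [Ex_ind ht ∅ (P ∪ Q) (disjoint_empty_left _), hm]
      push_cast
      simp
    have hE2 : Ex (ind t P Q) = ((t.descFactorial 2 : ℕ) : ℝ)
        * (((n - t).descFactorial 2 : ℕ) : ℝ)
        * (((n - 4).factorial : ℕ) : ℝ) / ((n.factorial : ℕ) : ℝ) := by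
      rw [Ex_ind ht P Q hd, hP, hQ, show n - 2 - 2 = n - 4 from by omega]
      push_cast
      ring
    have hE3 : Ex (ind t Q P) = ((t.descFactorial 2 : ℕ) : ℝ)
        * (((n - t).descFactorial 2 : ℕ) : ℝ)
        * (((n - 4).factorial : ℕ) : ℝ) / ((n.factorial : ℕ) : ℝ) := by
      rw [Ex_ind ht Q P hd.symm, hP, hQ, show n - 2 - 2 = n - 4 from by omega]
      push_cast
      ring
    rw [hE1, hE2, hE3, hE4]
    have hfn : ((n.factorial : ℕ) : ℝ)
        = (((n - 4).factorial : ℕ) : ℝ) * ((n.descFactorial 4 : ℕ) : ℝ) := by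
      exact_mod_cast (Nat.factorial_mul_descFactorial hn).symm
    have hf2 : (((n - 2).factorial : ℕ) : ℝ)
        = (((n - 4).factorial : ℕ) : ℝ) * (((n - 2).descFactorial 2 : ℕ) : ℝ) := by
      have h := Nat.factorial_mul_descFactorial (show 2 ≤ n - 2 by omega)
      rw [show n - 2 - 2 = n - 4 from by omega] at h
      exact_mod_cast h.symm
    have hcn4 : ((n.descFactorial 4 : ℕ) : ℝ)
        = (n : ℝ) * ((n : ℝ) - 1) * ((n : ℝ) - 2) * ((n : ℝ) - 3) := cast_desc4 n
    have hcn2 : (((n - 2).descFactorial 2 : ℕ) : ℝ)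
        = ((n : ℝ) - 2) * ((n : ℝ) - 3) := by
      rw [cast_desc2 (n - 2), hn2]
      ring
    have hct4 : ((t.descFactorial 4 : ℕ) : ℝ)
        = (t : ℝ) * ((t : ℝ) - 1) * ((t : ℝ) - 2) * ((t : ℝ) - 3) := cast_desc4 t
    have hcs4 : (((n - t).descFactorial 4 : ℕ) : ℝ)
        = ((n : ℝ) - (t : ℝ)) * ((n : ℝ) - (t : ℝ) - 1) * ((n : ℝ) - (t : ℝ) - 2)
          * ((n : ℝ) - (t : ℝ) - 3) := by
      rw [cast_desc4 (n - t), hnt]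
    have hF : (((n - 4).factorial : ℕ) : ℝ) ≠ 0 := by positivity
    have h0 : (0 : ℝ) < (n : ℝ) := by linarith
    have h1 : (0 : ℝ) < (n : ℝ) - 1 := by linarith
    have h2 : (0 : ℝ) < (n : ℝ) - 2 := by linarith
    have h3 : (0 : ℝ) < (n : ℝ) - 3 := by linarith
    rw [hfn, hf2, hαv, hβv, hct2, hcs2, hct4, hcs4, hcn2, hcn4]
    field_simp [hF, h0.ne', h1.ne', h2.ne', h3.ne']
    ring
  · -- the two pairs share at least one vertex
    have hz2 : ind t P Q = fun _ => (0 : ℝ) := ind_zero hd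
    have hz3 : ind t Q P = fun _ => (0 : ℝ) := ind_zero (fun hc => hd hc.symm)
    rw [hz2, hz3, Ex_zero]
    have hle1 : 2 ≤ #(P ∪ Q) := hP ▸ card_le_card subset_union_left
    have hinter : 1 ≤ #(P ∩ Q) := card_pos.mpr (not_disjoint_iff_nonempty_inter.mp hd)
    have hsum := card_union_add_card_inter P Q
    have hm23 : #(P ∪ Q) = 2 ∨ #(P ∪ Q) = 3 := by omega
    rcases hm23 with hm | hm
    · -- the two pairs coincide
      have hE1 : Ex (ind t (P ∪ Q) ∅) = ((t.descFactorial 2 : ℕ) : ℝ)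
          * (((n - 2).factorial : ℕ) : ℝ) / ((n.factorial : ℕ) : ℝ) := by
        rw [Ex_ind ht (P ∪ Q) ∅ (disjoint_empty_right _), hm]
        push_cast
        simp
      have hE4 : Ex (ind t ∅ (P ∪ Q)) = (((n - t).descFactorial 2 : ℕ) : ℝ)
          * (((n - 2).factorial : ℕ) : ℝ) / ((n.factorial : ℕ) : ℝ) := by
        rw [Ex_ind ht ∅ (P ∪ Q) (disjoint_empty_left _), hm]
        push_cast
        simp
      rw [hE1, hE4]
      have hfn : ((n.factorial : ℕ) : ℝ)
          = (((n - 2).factorial : ℕ) : ℝ) * ((n.descFactorial 2 : ℕ) : ℝ) := by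
        exact_mod_cast (Nat.factorial_mul_descFactorial (show 2 ≤ n by omega)).symm
      have hcn2 : ((n.descFactorial 2 : ℕ) : ℝ) = (n : ℝ) * ((n : ℝ) - 1) := cast_desc2 n
      have hF : (((n - 2).factorial : ℕ) : ℝ) ≠ 0 := by positivity
      have h0 : (0 : ℝ) < (n : ℝ) := by linarith
      have h1 : (0 : ℝ) < (n : ℝ) - 1 := by linarith
      rw [hfn, hαv, hβv, hct2, hcs2, hcn2]
      field_simp [hF, h0.ne', h1.ne']
      ring
    · -- the two pairs share exactly one vertex
      have hE1 : Ex (ind t (P ∪ Q) ∅) = ((t.descFactorial 3 : ℕ) : ℝ)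
          * (((n - 3).factorial : ℕ) : ℝ) / ((n.factorial : ℕ) : ℝ) := by
        rw [Ex_ind ht (P ∪ Q) ∅ (disjoint_empty_right _), hm]
        push_cast
        simp
      have hE4 : Ex (ind t ∅ (P ∪ Q)) = (((n - t).descFactorial 3 : ℕ) : ℝ)
          * (((n - 3).factorial : ℕ) : ℝ) / ((n.factorial : ℕ) : ℝ) := by
        rw [Ex_ind ht ∅ (P ∪ Q) (disjoint_empty_left _), hm]
        push_cast
        simp
      rw [hE1, hE4]
      have hfn : ((n.factorial : ℕ) : ℝ)
          = (((n - 3).factorial : ℕ) : ℝ) * ((n.descFactorial 3 : ℕ) : ℝ) := by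
        exact_mod_cast (Nat.factorial_mul_descFactorial (show 3 ≤ n by omega)).symm
      have hf2 : (((n - 2).factorial : ℕ) : ℝ)
          = (((n - 3).factorial : ℕ) : ℝ) * ((n : ℝ) - 2) := by
        have h : n - 2 = (n - 3) + 1 := by omega
        rw [h, Nat.factorial_succ]
        push_cast
        rw [hn3]
        ring
      have hcn3 : ((n.descFactorial 3 : ℕ) : ℝ)
          = (n : ℝ) * ((n : ℝ) - 1) * ((n : ℝ) - 2) := cast_desc3 n
      have hct3 : ((t.descFactorial 3 : ℕ) : ℝ)
          = (t : ℝ) * ((t : ℝ) - 1) * ((t : ℝ) - 2) := cast_desc3 t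
      have hcs3 : (((n - t).descFactorial 3 : ℕ) : ℝ)
          = ((n : ℝ) - (t : ℝ)) * ((n : ℝ) - (t : ℝ) - 1) * ((n : ℝ) - (t : ℝ) - 2) := by
        rw [cast_desc3 (n - t), hnt]
      have hF : (((n - 3).factorial : ℕ) : ℝ) ≠ 0 := by positivity
      have h0 : (0 : ℝ) < (n : ℝ) := by linarith
      have h1 : (0 : ℝ) < (n : ℝ) - 1 := by linarith
      have h2 : (0 : ℝ) < (n : ℝ) - 2 := by linarith
      rw [hfn, hf2, hαv, hβv, hct2, hcs2, hct3, hcs3, hcn3]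
      field_simp [hF, h0.ne', h1.ne', h2.ne']
      ring

end CovAux

namespace CovAux
variable {n t : ℕ}

lemma lab_le_iff {π : Equiv.Perm (Fin n)} {v : Fin n} : lab π v ≤ t ↔ v ∈ Sp t π := by
  rw [mem_Sp, lab]; omega

lemma lt_lab_iff {π : Equiv.Perm (Fin n)} {v : Fin n} : t < lab π v ↔ v ∉ Sp t π := by
  rw [mem_Sp, lab]; omega

lemma R1_sum (G : SimpleGraph (Fin n)) (π : Equiv.Perm (Fin n)) :
    ∑ p ∈ univ.filter (fun p : Fin n × Fin n => G.Adj p.1 p.2), ind t {p.1, p.2} ∅ π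
      = 2 * (R1 G t π : ℝ) := by
  have hind : ∀ p : Fin n × Fin n, ind t {p.1, p.2} ∅ π
      = if p.1 ∈ Sp t π ∧ p.2 ∈ Sp t π then (1:ℝ) else 0 := by
    intro p
    simp [ind, insert_subset_iff, singleton_subset_iff]
  rw [Finset.sum_congr rfl (fun p _ => hind p), Finset.sum_boole, filter_filter]
  -- auxiliary graph
  let G' : SimpleGraph (Fin n) :=
    { Adj := fun a b => G.Adj a b ∧ a ∈ Sp t π ∧ b ∈ Sp t π
      symm := ⟨by
        rintro a b ⟨h1, h2, h3⟩
        exact ⟨h1.symm, h3, h2⟩⟩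
      loopless := ⟨fun a ⟨h, _⟩ => G.loopless.irrefl a h⟩ }
  have hedge : G'.edgeFinset = G.edgeFinset.filter (fun e => ∀ v ∈ e, lab π v ≤ t) := by
    ext e
    induction e using Sym2.ind with
    | _ a b =>
      simp only [SimpleGraph.mem_edgeFinset, SimpleGraph.mem_edgeSet, mem_filter]
      constructor
      · rintro ⟨h1, h2, h3⟩
        refine ⟨h1, ?_⟩
        intro v hv
        rw [Sym2.mem_iff] at hv
        rcases hv with rfl | rfl
        · exact lab_le_iff.mpr h2
        · exact lab_le_iff.mpr h3
      · rintro ⟨h1, h2⟩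
        exact ⟨h1, lab_le_iff.mp (h2 a (Sym2.mem_mk_left a b)),
          lab_le_iff.mp (h2 b (Sym2.mem_mk_right a b))⟩
  have h2m := SimpleGraph.two_mul_card_edgeFinset (G := G')
  have hcards : #(univ.filter fun p : Fin n × Fin n =>
      G.Adj p.1 p.2 ∧ p.1 ∈ Sp t π ∧ p.2 ∈ Sp t π) = 2 * R1 G t π := by
    rw [show (univ.filter fun p : Fin n × Fin n =>
        G.Adj p.1 p.2 ∧ p.1 ∈ Sp t π ∧ p.2 ∈ Sp t π)
        = (univ.filter fun p : Fin n × Fin n => G'.Adj p.1 p.2) from rfl]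
    rw [← h2m, R1, ← hedge]
  rw [hcards]
  push_cast
  ring

lemma R2_sum (G : SimpleGraph (Fin n)) (π : Equiv.Perm (Fin n)) :
    ∑ p ∈ univ.filter (fun p : Fin n × Fin n => G.Adj p.1 p.2), ind t ∅ {p.1, p.2} π
      = 2 * (R2 G t π : ℝ) := by
  have hind : ∀ p : Fin n × Fin n, ind t ∅ {p.1, p.2} π
      = if p.1 ∉ Sp t π ∧ p.2 ∉ Sp t π then (1:ℝ) else 0 := by
    intro p
    simp [ind, insert_subset_iff, singleton_subset_iff, disjoint_left, and_comm]
  rw [Finset.sum_congr rfl (fun p _ => hind p), Finset.sum_boole, filter_filter]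
  let G' : SimpleGraph (Fin n) :=
    { Adj := fun a b => G.Adj a b ∧ a ∉ Sp t π ∧ b ∉ Sp t π
      symm := ⟨by
        rintro a b ⟨h1, h2, h3⟩
        exact ⟨h1.symm, h3, h2⟩⟩
      loopless := ⟨fun a ⟨h, _⟩ => G.loopless.irrefl a h⟩ }
  have hedge : G'.edgeFinset = G.edgeFinset.filter (fun e => ∀ v ∈ e, t < lab π v) := by
    ext e
    induction e using Sym2.ind with
    | _ a b =>
      simp only [SimpleGraph.mem_edgeFinset, SimpleGraph.mem_edgeSet, mem_filter]
      constructor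
      · rintro ⟨h1, h2, h3⟩
        refine ⟨h1, ?_⟩
        intro v hv
        rw [Sym2.mem_iff] at hv
        rcases hv with rfl | rfl
        · exact lt_lab_iff.mpr h2
        · exact lt_lab_iff.mpr h3
      · rintro ⟨h1, h2⟩
        exact ⟨h1, lt_lab_iff.mp (h2 a (Sym2.mem_mk_left a b)),
          lt_lab_iff.mp (h2 b (Sym2.mem_mk_right a b))⟩
  have h2m := SimpleGraph.two_mul_card_edgeFinset (G := G')
  have hcards : #(univ.filter fun p : Fin n × Fin n =>
      G.Adj p.1 p.2 ∧ p.1 ∉ Sp t π ∧ p.2 ∉ Sp t π) = 2 * R2 G t π := by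
    rw [show (univ.filter fun p : Fin n × Fin n =>
        G.Adj p.1 p.2 ∧ p.1 ∉ Sp t π ∧ p.2 ∉ Sp t π)
        = (univ.filter fun p : Fin n × Fin n => G'.Adj p.1 p.2) from rfl]
    rw [← h2m, R2, ← hedge]
  rw [hcards]
  push_cast
  ring

end CovAux

namespace CovAux
variable {n : ℕ}
lemma Cov_comm (f g : Equiv.Perm (Fin n) → ℝ) : Cov f g = Cov g f := by
  simp only [Cov]
  exact congrArg Ex (funext fun π => mul_comm _ _)
end CovAux

theorem covariance_Rw_Rdiff_eq_zero (n t : ℕ) (hn : 4 ≤ n) (ht1 : 1 ≤ t) (ht2 : t < n)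
    (G : SimpleGraph (Fin n)) :
    Cov (fun π => Rw G t π) (fun π => Rdiff G t π) = 0 := by
  have hnR : (4 : ℝ) ≤ (n : ℝ) := by exact_mod_cast hn
  have hn2 : ((n : ℝ) - 2) ≠ 0 := ne_of_gt (by linarith)
  have hRw : (fun π : Equiv.Perm (Fin n) => Rw G t π)
      = fun π => (1 / ((n : ℝ) - 2)) *
          (((n - t - 1 : ℕ) : ℝ) * (R1 G t π : ℝ) + ((t - 1 : ℕ) : ℝ) * (R2 G t π : ℝ)) := by
    funext π
    simp only [Rw]
    have hc1 : ((n - t - 1 : ℕ) : ℝ) = (n : ℝ) - (t : ℝ) - 1 := by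
      rw [Nat.cast_sub (by omega), Nat.cast_sub (by omega)]
      norm_num
    have hc2 : ((t - 1 : ℕ) : ℝ) = (t : ℝ) - 1 := by
      rw [Nat.cast_sub ht1]
      norm_num
    rw [hc1, hc2]
    field_simp
    ring_nf
  set Pset : Finset (Fin n × Fin n) :=
    univ.filter (fun p : Fin n × Fin n => G.Adj p.1 p.2) with hPset
  have hZsum : (fun π : Equiv.Perm (Fin n) => ∑ p ∈ Pset,
        (((n - t - 1 : ℕ) : ℝ) * CovAux.ind t {p.1, p.2} ∅ π
          + ((t - 1 : ℕ) : ℝ) * CovAux.ind t ∅ {p.1, p.2} π))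
      = fun π => 2 * (((n - t - 1 : ℕ) : ℝ) * (R1 G t π : ℝ)
          + ((t - 1 : ℕ) : ℝ) * (R2 G t π : ℝ)) := by
    funext π
    rw [Finset.sum_add_distrib, ← Finset.mul_sum, ← Finset.mul_sum, hPset,
      CovAux.R1_sum G π, CovAux.R2_sum G π]
    ring
  have hWsum : (fun π : Equiv.Perm (Fin n) => ∑ p ∈ Pset,
        (CovAux.ind t {p.1, p.2} ∅ π - CovAux.ind t ∅ {p.1, p.2} π))
      = fun π => 2 * Rdiff G t π := by
    funext π
    rw [Finset.sum_sub_distrib, hPset, CovAux.R1_sum G π, CovAux.R2_sum G π]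
    simp only [Rdiff]
    ring
  have hdouble : Cov (fun π : Equiv.Perm (Fin n) => ∑ p ∈ Pset,
        (((n - t - 1 : ℕ) : ℝ) * CovAux.ind t {p.1, p.2} ∅ π
          + ((t - 1 : ℕ) : ℝ) * CovAux.ind t ∅ {p.1, p.2} π))
      (fun π : Equiv.Perm (Fin n) => ∑ q ∈ Pset,
        (CovAux.ind t {q.1, q.2} ∅ π - CovAux.ind t ∅ {q.1, q.2} π)) = 0 := by
    rw [CovAux.Cov_sum]
    apply Finset.sum_eq_zero
    intro p hp
    apply Finset.sum_eq_zero
    intro q hq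
    rw [hPset, mem_filter] at hp hq
    exact CovAux.cov_pair hn ht1 ht2 hp.2.ne hq.2.ne
  rw [hZsum, hWsum] at hdouble
  rw [CovAux.Cov_smul_left] at hdouble
  rw [CovAux.Cov_comm] at hdouble
  rw [CovAux.Cov_smul_left] at hdouble
  rw [CovAux.Cov_comm] at hdouble
  have hzero : Cov (fun π => ((n - t - 1 : ℕ) : ℝ) * (R1 G t π : ℝ)
      + ((t - 1 : ℕ) : ℝ) * (R2 G t π : ℝ)) (fun π => Rdiff G t π) = 0 := by
    linarith
  rw [hRw, CovAux.Cov_smul_left, hzero, mul_zero]
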